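/- The exponential generating function f(x) = Σ_{n≥1} t_n · x^n/n!, where t_n is the number of rooted trees with n labeled leaves in which every internal vertex has at least two children (phylogenetic trees / total partitions), satisfies the functional equation 1 − x + 2·f(x) = exp(f(x)) as formal power series. -/

import Mathlib

open PowerSeries

/-- A simplified assembly tree on a finite leaf set `X`, encoded by the family of labels of
its vertices: it contains the full set (root) and all singletons (leaves), its members are
nonempty, and it is laminar; this exactly encodes rooted leaf-labeled trees in which every
internal vertex has at least two children. -/
def IsAssemblyTree {X : Type*} [Fintype X] [DecidableEq X] (T : Finset (Finset X)) : Prop :=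
  (∀ A ∈ T, A.Nonempty) ∧ Finset.univ ∈ T ∧ (∀ x : X, {x} ∈ T) ∧
    ∀ A ∈ T, ∀ B ∈ T, A ⊆ B ∨ B ⊆ A ∨ Disjoint A B

/-- The number `t n` of rooted trees with `n` labeled leaves in which every internal vertex
has at least two children (total partitions, OEIS A000311). -/
noncomputable def t (n : ℕ) : ℕ := Nat.card {T : Finset (Finset (Fin n)) // IsAssemblyTree T}

/-- The exponential generating function `f(x) = Σ_{n ≥ 1} t_n x^n / n!`. -/
noncomputable def f : PowerSeries ℚ :=
  PowerSeries.mk fun n => if n = 0 then 0 else (t n : ℚ) / (n.factorial : ℚ)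

/-- The composition `exp ∘ g` for a power series `g` with zero constant term:
its `n`-th coefficient is `Σ_{k ≤ n} (coeff n g^k) / k!`. -/
noncomputable def expComp (g : PowerSeries ℚ) : PowerSeries ℚ :=
  PowerSeries.mk fun n =>
    ∑ k ∈ Finset.range (n + 1), (PowerSeries.coeff (R := ℚ) n (g ^ k)) / (k.factorial : ℚ)

open Finset Function

section Aux
variable {X : Type*} [DecidableEq X] {Y : Type*} [DecidableEq Y]

def IsTreeOn (s : Finset X) (T : Finset (Finset X)) : Prop :=
  (∀ A ∈ T, A.Nonempty) ∧ s ∈ T ∧ (∀ A ∈ T, A ⊆ s) ∧ (∀ x ∈ s, {x} ∈ T) ∧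
    ∀ A ∈ T, ∀ B ∈ T, A ⊆ B ∨ B ⊆ A ∨ Disjoint A B

lemma isTreeOn_univ_iff [Fintype X] (T : Finset (Finset X)) :
    IsTreeOn Finset.univ T ↔ IsAssemblyTree T := by
  unfold IsTreeOn IsAssemblyTree
  refine ⟨fun ⟨h1, h2, h3, h4, h5⟩ => ⟨h1, h2, fun x => h4 x (mem_univ x), h5⟩,
    fun ⟨h1, h2, h3, h4⟩ => ⟨h1, h2, fun A _ => subset_univ A, fun x _ => h3 x, h4⟩⟩

lemma t_zero : t 0 = 0 := by
  have : IsEmpty {T : Finset (Finset (Fin 0)) // IsAssemblyTree T} := by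
    refine ⟨fun ⟨T, h1, h2, _, _⟩ => ?_⟩
    have := h1 _ h2
    simp [Finset.univ_eq_empty] at this
  simp [t, Nat.card_of_isEmpty]

lemma t_one : t 1 = 1 := by
  rw [t, Nat.card_eq_one_iff_unique]
  constructor
  · refine ⟨fun ⟨T, hT⟩ ⟨T', hT'⟩ => ?_⟩
    have key : ∀ (S : Finset (Finset (Fin 1))), IsAssemblyTree S → S = {Finset.univ} := by
      rintro S ⟨h1, h2, h3, h4⟩
      apply Finset.ext
      intro A
      simp only [Finset.mem_singleton]
      constructor
      · intro hA
        have hne := h1 A hA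
        apply Finset.eq_univ_of_card
        have h5 : A.card ≤ 1 := le_trans (Finset.card_le_card (Finset.subset_univ A)) (by simp)
        have h6 : 1 ≤ A.card := Finset.Nonempty.card_pos hne
        simp only [Fintype.card_fin]
        omega
      · intro h; subst h; exact h2
    exact Subtype.ext ((key T hT).trans (key T' hT').symm)
  · refine ⟨⟨{Finset.univ}, ?_, ?_, ?_, ?_⟩⟩
    · intro A hA; rw [Finset.mem_singleton] at hA; subst hA; exact Finset.univ_nonempty
    · exact Finset.mem_singleton_self _
    · intro x
      have : ({x} : Finset (Fin 1)) = Finset.univ := by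
        apply Finset.eq_univ_of_card; simp
      rw [this]; exact Finset.mem_singleton_self _
    · intro A hA B hB
      rw [Finset.mem_singleton] at hA hB
      subst hA; subst hB; exact Or.inl (Finset.Subset.refl _)

lemma coeff_f (n : ℕ) : coeff n f = (t n : ℚ) / (n.factorial : ℚ) := by
  rw [f, coeff_mk]
  split_ifs with h
  · subst h; simp [t_zero]
  · rfl

lemma constantCoeff_f : constantCoeff f = 0 := by
  have := coeff_f 0
  simpa [t_zero, coeff_zero_eq_constantCoeff] using this


variable {X : Type*} [DecidableEq X] {Y : Type*} [DecidableEq Y]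


variable {φ : X → Y}
set_option linter.unusedSectionVars false

lemma pre_img (hφ : Injective φ) (A : Finset X) : (A.image φ).preimage φ hφ.injOn = A := by
  ext x; simp only [mem_preimage, mem_image]
  exact ⟨fun ⟨a, ha, h⟩ => (hφ h) ▸ ha, fun h => ⟨x, h, rfl⟩⟩

lemma img_pre (hφ : Injective φ) {B : Finset Y} {s : Finset X} (hB : B ⊆ s.image φ) :
    (B.preimage φ hφ.injOn).image φ = B := by
  ext y; simp only [mem_image, mem_preimage]
  constructor
  · rintro ⟨a, ha, rfl⟩; exact ha
  · intro hy
    obtain ⟨x, _, rfl⟩ := mem_image.1 (hB hy)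
    exact ⟨x, hy, rfl⟩

lemma isTreeOn_image (hφ : Injective φ) {s : Finset X} {T : Finset (Finset X)} (h : IsTreeOn s T) :
    IsTreeOn (s.image φ) (T.image (Finset.image φ)) := by
  obtain ⟨h1, h2, h3, h4, h5⟩ := h
  refine ⟨?_, mem_image_of_mem _ h2, ?_, ?_, ?_⟩
  · rintro B hB; obtain ⟨A, hA, rfl⟩ := mem_image.1 hB
    exact (h1 A hA).image φ
  · rintro B hB; obtain ⟨A, hA, rfl⟩ := mem_image.1 hB
    exact image_subset_image (h3 A hA)
  · rintro y hy; obtain ⟨x, hx, rfl⟩ := mem_image.1 hy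
    exact (Finset.image_singleton φ x) ▸ mem_image_of_mem _ (h4 x hx)
  · rintro B hB B' hB'
    obtain ⟨A, hA, rfl⟩ := mem_image.1 hB
    obtain ⟨A', hA', rfl⟩ := mem_image.1 hB'
    rcases h5 A hA A' hA' with h | h | h
    · exact Or.inl (image_subset_image h)
    · exact Or.inr (Or.inl (image_subset_image h))
    · exact Or.inr (Or.inr ((Finset.disjoint_image hφ).2 h))

lemma isTreeOn_preimage (hφ : Injective φ) {s : Finset X} {T : Finset (Finset Y)} (h : IsTreeOn (s.image φ) T) :
    IsTreeOn s (T.image (fun B => B.preimage φ hφ.injOn)) := by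
  obtain ⟨h1, h2, h3, h4, h5⟩ := h
  have hpre : ∀ B ∈ T, (B.preimage φ hφ.injOn).image φ = B := fun B hB => img_pre hφ (h3 B hB)
  refine ⟨?_, ?_, ?_, ?_, ?_⟩
  · rintro A hA; obtain ⟨B, hB, rfl⟩ := mem_image.1 hA
    obtain ⟨y, hy⟩ := h1 B hB
    obtain ⟨x, _, rfl⟩ := mem_image.1 (h3 B hB hy)
    exact ⟨x, mem_preimage.2 hy⟩
  · have : s = (s.image φ).preimage φ hφ.injOn := (pre_img hφ s).symm
    rw [this]; exact mem_image_of_mem _ h2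
  · rintro A hA; obtain ⟨B, hB, rfl⟩ := mem_image.1 hA
    intro x hx
    have := h3 B hB (mem_preimage.1 hx)
    obtain ⟨x', hx', he⟩ := mem_image.1 this
    exact (hφ he) ▸ hx'
  · intro x hx
    have : ({x} : Finset X) = ({φ x} : Finset Y).preimage φ hφ.injOn := by
      rw [← Finset.image_singleton φ x, pre_img hφ]
    rw [this]
    exact mem_image_of_mem _ (h4 (φ x) (mem_image_of_mem _ hx))
  · rintro A hA A' hA'
    obtain ⟨B, hB, rfl⟩ := mem_image.1 hA
    obtain ⟨B', hB', rfl⟩ := mem_image.1 hA'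
    rcases h5 B hB B' hB' with h | h | h
    · exact Or.inl (monotone_preimage hφ h)
    · exact Or.inr (Or.inl (monotone_preimage hφ h))
    · refine Or.inr (Or.inr (Finset.disjoint_left.2 ?_))
      intro x hx hx'
      exact Finset.disjoint_left.1 h (mem_preimage.1 hx) (mem_preimage.1 hx')

noncomputable def treeOnCongr (hφ : Injective φ) (s : Finset X) :
    {T : Finset (Finset X) // IsTreeOn s T} ≃ {T : Finset (Finset Y) // IsTreeOn (s.image φ) T} where
  toFun T := ⟨T.1.image (Finset.image φ), isTreeOn_image hφ T.2⟩
  invFun T := ⟨T.1.image (fun B => B.preimage φ hφ.injOn), isTreeOn_preimage hφ T.2⟩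
  left_inv T := by
    apply Subtype.ext
    simp only [Finset.image_image]
    rw [show ((fun B => Finset.preimage B φ hφ.injOn) ∘ Finset.image φ) = id from
      funext fun A => pre_img hφ A]
    exact Finset.image_id
  right_inv T := by
    apply Subtype.ext
    simp only [Finset.image_image]
    have : ∀ B ∈ T.1, (Finset.image φ ∘ fun B => Finset.preimage B φ hφ.injOn) B = id B :=
      fun B hB => img_pre hφ (T.2.2.2.1 B hB)
    rw [Finset.image_congr fun B hB => this B hB, Finset.image_id]


lemma card_isTreeOn [Fintype X] (s : Finset X) :
    Nat.card {T : Finset (Finset X) // IsTreeOn s T} = t s.card := by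
  classical
  set m := s.card with hm
  have e : Fin m ≃ {x // x ∈ s} := (Fintype.equivFinOfCardEq (Fintype.card_coe s)).symm
  set φ : Fin m → X := fun i => (e i : X) with hφdef
  have hφ : Injective φ := fun i j h => e.injective (Subtype.ext h)
  have himg : (Finset.univ : Finset (Fin m)).image φ = s := by
    ext y
    simp only [mem_image, mem_univ, true_and]
    constructor
    · rintro ⟨i, rfl⟩; exact (e i).2
    · intro hy; exact ⟨e.symm ⟨y, hy⟩, by simp [hφdef]⟩
  have equiv1 := treeOnCongr hφ (Finset.univ : Finset (Fin m))
  rw [himg] at equiv1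
  have equiv2 : {T : Finset (Finset (Fin m)) // IsTreeOn Finset.univ T} ≃
      {T : Finset (Finset (Fin m)) // IsAssemblyTree T} :=
    Equiv.subtypeEquivRight fun T => isTreeOn_univ_iff T
  rw [t, ← Nat.card_congr equiv2, ← Nat.card_congr equiv1]
section C
variable {X : Type*} [DecidableEq X]

def IsForestOn (k : ℕ) (s : Finset X)
    (p : (Fin k → Finset X) × (Fin k → Finset (Finset X))) : Prop :=
  (∀ i j : Fin k, i ≠ j → Disjoint (p.1 i) (p.1 j)) ∧ Finset.univ.sup p.1 = s ∧
    ∀ i, IsTreeOn (p.1 i) (p.2 i)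

def ForestOn (k : ℕ) (s : Finset X) :=
  {p : (Fin k → Finset X) × (Fin k → Finset (Finset X)) // IsForestOn k s p}

lemma mem_sup_iff {k : ℕ} {b : Fin k → Finset X} {x : X} :
    x ∈ Finset.univ.sup b ↔ ∃ i, x ∈ b i := by
  rw [Finset.mem_sup]; simp

lemma forest_block_nonempty {k : ℕ} {s : Finset X} (p : ForestOn k s) (i : Fin k) :
    (p.1.1 i).Nonempty := by
  have h := (p.2.2.2 i)
  exact h.1 _ h.2.1

lemma forest_init {k : ℕ} {s : Finset X} (p : ForestOn (k + 1) s) :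
    IsForestOn k (s \ p.1.1 (Fin.last k)) (Fin.init p.1.1, Fin.init p.1.2) := by
  obtain ⟨⟨b, q⟩, hd, hsup, ht⟩ := p
  dsimp only at hd hsup ht ⊢
  have hmem : ∀ x, x ∈ s ↔ ∃ i, x ∈ b i := fun x => by rw [← hsup, mem_sup_iff]
  have hsub : ∀ i, b i ⊆ s := fun i x hx => (hmem x).2 ⟨i, hx⟩
  refine ⟨?_, ?_, ?_⟩
  · intro i j hij
    exact hd _ _ (fun h => hij (Fin.castSucc_injective k h))
  · ext x
    rw [mem_sup_iff, Finset.mem_sdiff]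
    dsimp only [Fin.init]
    constructor
    · rintro ⟨i, hi⟩
      refine ⟨hsub _ hi, fun hx => ?_⟩
      exact Finset.disjoint_left.1
        (hd _ _ (Fin.ne_last_of_lt (Fin.castSucc_lt_last i))) hi hx
    · rintro ⟨hx, hxl⟩
      obtain ⟨j, hj⟩ := (hmem x).1 hx
      rcases (Fin.eq_castSucc_or_eq_last j).resolve_right
        (fun h => hxl (h ▸ hj)) with ⟨i, rfl⟩
      exact ⟨i, hj⟩
  · intro i; exact ht i.castSucc

lemma forest_snoc {k : ℕ} {s : Finset X} (a : Finset X) (ha : a ∈ s.powerset)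
    (T : Finset (Finset X)) (hT : IsTreeOn a T) (p : ForestOn k (s \ a)) :
    IsForestOn (k + 1) s (Fin.snoc p.1.1 a, Fin.snoc p.1.2 T) := by
  obtain ⟨⟨b, q⟩, hd, hsup, htr⟩ := p
  dsimp only at hd hsup htr ⊢
  have key : ∀ i : Fin k, Disjoint (b i) a := by
    intro i
    have hsub : b i ⊆ s \ a := hsup ▸ Finset.le_sup (f := b) (Finset.mem_univ i)
    exact Finset.disjoint_of_subset_left hsub Finset.sdiff_disjoint
  refine ⟨?_, ?_, ?_⟩
  · intro i j hij
    rcases Fin.eq_castSucc_or_eq_last i with ⟨i', rfl⟩ | rfl <;>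
      rcases Fin.eq_castSucc_or_eq_last j with ⟨j', rfl⟩ | rfl <;>
      simp only [Fin.snoc_castSucc, Fin.snoc_last]
    · exact hd _ _ (fun h => hij (h ▸ rfl))
    · exact key i'
    · exact (key j').symm
    · exact absurd rfl hij
  · ext x
    rw [mem_sup_iff]
    constructor
    · rintro ⟨i, hi⟩
      rcases Fin.eq_castSucc_or_eq_last i with ⟨i', rfl⟩ | rfl
      · simp only [Fin.snoc_castSucc] at hi
        have : x ∈ s \ a := hsup ▸ (mem_sup_iff.2 ⟨i', hi⟩)
        exact (Finset.mem_sdiff.1 this).1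
      · simp only [Fin.snoc_last] at hi
        exact Finset.mem_powerset.1 ha hi
    · intro hx
      by_cases hxa : x ∈ a
      · exact ⟨Fin.last k, by simpa only [Fin.snoc_last] using hxa⟩
      · have : x ∈ Finset.univ.sup b := hsup ▸ Finset.mem_sdiff.2 ⟨hx, hxa⟩
        obtain ⟨i, hi⟩ := mem_sup_iff.1 this
        exact ⟨i.castSucc, by simpa only [Fin.snoc_castSucc] using hi⟩
  · intro i
    rcases Fin.eq_castSucc_or_eq_last i with ⟨i', rfl⟩ | rfl <;>
      simp only [Fin.snoc_castSucc, Fin.snoc_last]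
    · exact htr i'
    · exact hT

lemma forest_sigma_ext {k : ℕ} {s : Finset X}
    {x y : Σ a : {a : Finset X // a ∈ s.powerset},
      {T : Finset (Finset X) // IsTreeOn a.1 T} × ForestOn k (s \ a.1)}
    (h1 : x.1.1 = y.1.1) (h2 : x.2.1.1 = y.2.1.1) (h3 : x.2.2.1 = y.2.2.1) : x = y := by
  obtain ⟨⟨a, ha⟩, ⟨T, hT⟩, ⟨p, hp⟩⟩ := x
  obtain ⟨⟨a', ha'⟩, ⟨T', hT'⟩, ⟨p', hp'⟩⟩ := y
  dsimp only at h1 h2 h3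
  subst h1; subst h2; subst h3
  rfl

def forestSplit (k : ℕ) (s : Finset X) :
    ForestOn (k + 1) s ≃
      Σ a : {a : Finset X // a ∈ s.powerset},
        {T : Finset (Finset X) // IsTreeOn a.1 T} × ForestOn k (s \ a.1) where
  toFun p :=
    ⟨⟨p.1.1 (Fin.last k), Finset.mem_powerset.2 (by
        intro x hx
        have h2 := p.2.2.1
        have h3 : x ∈ Finset.univ.sup p.1.1 := mem_sup_iff.2 ⟨_, hx⟩
        rwa [h2] at h3)⟩,
     ⟨p.1.2 (Fin.last k), p.2.2.2 (Fin.last k)⟩,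
     ⟨(Fin.init p.1.1, Fin.init p.1.2), forest_init p⟩⟩
  invFun z := ⟨(Fin.snoc z.2.2.1.1 z.1.1, Fin.snoc z.2.2.1.2 z.2.1.1),
    forest_snoc z.1.1 z.1.2 z.2.1.1 z.2.1.2 z.2.2⟩
  left_inv p := by
    apply Subtype.ext
    exact Prod.ext (Fin.snoc_init_self _) (Fin.snoc_init_self _)
  right_inv z := by
    apply forest_sigma_ext <;> dsimp only
    · exact Fin.snoc_last _ _
    · exact Fin.snoc_last _ _
    · refine Prod.ext ?_ ?_ <;> simp [Fin.init_snoc]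
end C
section D
variable {X : Type*} [DecidableEq X] [Fintype X]

noncomputable instance forestOnFintype (k : ℕ) (s : Finset X) : Fintype (ForestOn k s) := by
  classical
  exact Subtype.fintype _

noncomputable instance treeOnFintype (s : Finset X) :
    Fintype {T : Finset (Finset X) // IsTreeOn s T} := by
  classical
  exact Subtype.fintype _

lemma card_forestOn (k : ℕ) (s : Finset X) :
    (Nat.card (ForestOn k s) : ℚ) =
      (s.card.factorial : ℚ) * PowerSeries.coeff s.card (f ^ k) := by
  classical
  induction k generalizing s with
  | zero =>
    by_cases hs : s = ∅
    · subst hs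
      have h1 : Nat.card (ForestOn 0 (∅ : Finset X)) = 1 := by
        rw [Nat.card_eq_one_iff_unique]
        refine ⟨⟨fun p p' => ?_⟩, ⟨⟨(fun i => i.elim0, fun i => i.elim0),
          fun i _ _ => i.elim0, by simp, fun i => i.elim0⟩⟩⟩
        apply Subtype.ext
        exact Prod.ext (funext fun i => i.elim0) (funext fun i => i.elim0)
      rw [h1]; simp
    · have he : IsEmpty (ForestOn 0 s) := ⟨fun p => hs (by rw [← p.2.2.1]; simp)⟩
      rw [Nat.card_of_isEmpty]
      have hs' : s.card ≠ 0 := by simpa [Finset.card_eq_zero] using hs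
      simp [PowerSeries.coeff_one, hs']
  | succ k ih =>
    rw [Nat.card_congr (forestSplit k s)]
    rw [Nat.card_eq_fintype_card, Fintype.card_sigma]
    have step1 : ∀ a : {a : Finset X // a ∈ s.powerset},
        (Fintype.card ({T : Finset (Finset X) // IsTreeOn a.1 T} × ForestOn k (s \ a.1)) : ℚ)
          = (t a.1.card : ℚ) * ((Nat.card (ForestOn k (s \ a.1)) : ℚ)) := by
      intro a
      rw [Fintype.card_prod]
      push_cast
      rw [← Nat.card_eq_fintype_card, ← Nat.card_eq_fintype_card, card_isTreeOn]
    push_cast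
    rw [Finset.sum_congr rfl (fun a _ => step1 a)]
    rw [Finset.sum_coe_sort s.powerset
      (fun a => (t a.card : ℚ) * (Nat.card (ForestOn k (s \ a)) : ℚ))]
    have step2 : ∀ a ∈ s.powerset,
        (t a.card : ℚ) * (Nat.card (ForestOn k (s \ a)) : ℚ)
          = (t a.card : ℚ) * ((s.card - a.card).factorial : ℚ)
              * PowerSeries.coeff (s.card - a.card) (f ^ k) := by
      intro a ha
      rw [ih (s \ a), Finset.card_sdiff_of_subset (Finset.mem_powerset.1 ha)]
      ring
    rw [Finset.sum_congr rfl step2, Finset.sum_powerset s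
      (fun a => (t a.card : ℚ) * ((s.card - a.card).factorial : ℚ)
        * PowerSeries.coeff (s.card - a.card) (f ^ k))]
    have step3 : ∀ j ∈ Finset.range (s.card + 1),
        ∑ a ∈ Finset.powersetCard j s,
          ((t a.card : ℚ) * ((s.card - a.card).factorial : ℚ)
            * PowerSeries.coeff (s.card - a.card) (f ^ k))
        = (s.card.choose j : ℚ) * ((t j : ℚ) * ((s.card - j).factorial : ℚ)
            * PowerSeries.coeff (s.card - j) (f ^ k)) := by
      intro j hj
      rw [Finset.sum_congr rfl (fun a ha => by
        rw [(Finset.mem_powersetCard.1 ha).2]), Finset.sum_const, nsmul_eq_mul,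
        Finset.card_powersetCard]
    rw [Finset.sum_congr rfl step3]
    rw [pow_succ' (f) k, PowerSeries.coeff_mul,
      Finset.Nat.sum_antidiagonal_eq_sum_range_succ_mk, Finset.mul_sum]
    refine Finset.sum_congr rfl (fun j hj => ?_)
    rw [coeff_f, Nat.cast_choose ℚ (Nat.lt_succ_iff.1 (Finset.mem_range.1 hj))]
    have h1 : ((j.factorial : ℚ)) ≠ 0 := Nat.cast_ne_zero.2 (Nat.factorial_ne_zero j)
    have h2 : (((s.card - j).factorial : ℚ)) ≠ 0 := Nat.cast_ne_zero.2 (Nat.factorial_ne_zero _)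
    field_simp
end D
section E
variable {X : Type*} [DecidableEq X] [Fintype X]

def childSet (T : Finset (Finset X)) : Finset (Finset X) :=
  T.filter (fun A => A ≠ Finset.univ ∧ ∀ B ∈ T, A ⊆ B → B = A ∨ B = Finset.univ)

lemma mem_childSet {T : Finset (Finset X)} {A : Finset X} : A ∈ childSet T ↔
    A ∈ T ∧ A ≠ Finset.univ ∧ ∀ B ∈ T, A ⊆ B → B = A ∨ B = Finset.univ := by
  classical
  simp [childSet]

lemma exists_child {T : Finset (Finset X)} (h : IsTreeOn Finset.univ T)
    {A : Finset X} (hA : A ∈ T) (hAne : A ≠ Finset.univ) :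
    ∃ C ∈ childSet T, A ⊆ C := by
  classical
  set F := T.filter (fun B => A ⊆ B ∧ B ≠ Finset.univ) with hF
  have hFne : F.Nonempty := ⟨A, by simp [hF, hA, hAne]⟩
  obtain ⟨C, hCF, hCmax⟩ := Finset.exists_max_image F Finset.card hFne
  rw [hF, Finset.mem_filter] at hCF
  refine ⟨C, mem_childSet.2 ⟨hCF.1, hCF.2.2, ?_⟩, hCF.2.1⟩
  intro B hB hCB
  by_cases hBu : B = Finset.univ
  · exact Or.inr hBu
  · left
    have hBF : B ∈ F := by
      rw [hF, Finset.mem_filter]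
      exact ⟨hB, hCF.2.1.trans hCB, hBu⟩
    exact (Finset.eq_of_subset_of_card_le hCB (hCmax B hBF)).symm

lemma child_eq_or_disjoint {T : Finset (Finset X)} (h : IsTreeOn Finset.univ T)
    {C C' : Finset X} (hC : C ∈ childSet T) (hC' : C' ∈ childSet T) :
    C = C' ∨ Disjoint C C' := by
  rw [mem_childSet] at hC hC'
  rcases h.2.2.2.2 C hC.1 C' hC'.1 with hs | hs | hs
  · rcases hC.2.2 C' hC'.1 hs with h1 | h1
    · exact Or.inl h1.symm
    · exact absurd h1 hC'.2.1
  · rcases hC'.2.2 C hC.1 hs with h1 | h1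
    · exact Or.inl h1
    · exact absurd h1 hC.2.1
  · exact Or.inr hs
end E
section G
variable {X : Type*} [DecidableEq X] [Fintype X]

lemma isTreeOn_filter {s : Finset X} {T : Finset (Finset X)} (h : IsTreeOn s T)
    {C : Finset X} (hC : C ∈ T) : IsTreeOn C (T.filter (· ⊆ C)) := by
  classical
  obtain ⟨h1, h2, h3, h4, h5⟩ := h
  refine ⟨?_, ?_, ?_, ?_, ?_⟩
  · intro A hA; exact h1 A (Finset.mem_filter.1 hA).1
  · exact Finset.mem_filter.2 ⟨hC, Finset.Subset.refl C⟩
  · intro A hA; exact (Finset.mem_filter.1 hA).2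
  · intro x hx
    exact Finset.mem_filter.2 ⟨h4 x (h3 C hC hx), Finset.singleton_subset_iff.2 hx⟩
  · intro A hA B hB
    exact h5 A (Finset.mem_filter.1 hA).1 B (Finset.mem_filter.1 hB).1

def glue {k : ℕ} (p : ForestOn k (Finset.univ : Finset X)) : Finset (Finset X) :=
  insert Finset.univ (Finset.univ.biUnion p.1.2)

lemma mem_glue {k : ℕ} {p : ForestOn k (Finset.univ : Finset X)} {A : Finset X} :
    A ∈ glue p ↔ A = Finset.univ ∨ ∃ i, A ∈ p.1.2 i := by
  classical
  simp [glue]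

lemma glue_isTreeOn {k : ℕ} (hX : Nonempty X) (p : ForestOn k (Finset.univ : Finset X)) :
    IsTreeOn Finset.univ (glue p) := by
  classical
  obtain ⟨⟨b, q⟩, hd, hsup, ht⟩ := p
  dsimp only at hd hsup ht
  refine ⟨?_, ?_, fun A _ => Finset.subset_univ A, ?_, ?_⟩
  · intro A hA
    rcases mem_glue.1 hA with rfl | ⟨i, hi⟩
    · exact Finset.univ_nonempty
    · exact (ht i).1 A hi
  · exact Finset.mem_insert_self _ _
  · intro x _
    have hx : x ∈ Finset.univ.sup b := hsup.symm ▸ Finset.mem_univ x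
    obtain ⟨i, hi⟩ := mem_sup_iff.1 hx
    exact mem_glue.2 (Or.inr ⟨i, (ht i).2.2.2.1 x hi⟩)
  · intro A hA B hB
    rcases mem_glue.1 hA with rfl | ⟨i, hi⟩
    · exact Or.inr (Or.inl (Finset.subset_univ B))
    rcases mem_glue.1 hB with rfl | ⟨j, hj⟩
    · exact Or.inl (Finset.subset_univ A)
    by_cases hij : i = j
    · subst hij
      exact (ht i).2.2.2.2 A hi B hj
    · refine Or.inr (Or.inr (Finset.disjoint_of_subset_left ((ht i).2.2.1 A hi)
        (Finset.disjoint_of_subset_right ((ht j).2.2.1 B hj) (hd i j hij))))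

lemma glue_block_ne_univ {k : ℕ} (hk : 2 ≤ k) (p : ForestOn k (Finset.univ : Finset X))
    (i : Fin k) : p.1.1 i ≠ Finset.univ := by
  intro hiu
  have hcard : 1 < Fintype.card (Fin k) := by simp [Fintype.card_fin]; omega
  obtain ⟨j, hji⟩ := Fintype.exists_ne_of_one_lt_card hcard i
  have hjne := forest_block_nonempty p j
  have hdisj := p.2.1 j i hji
  rw [hiu] at hdisj
  obtain ⟨x, hx⟩ := hjne
  exact Finset.disjoint_left.1 hdisj hx (Finset.mem_univ x)
  
lemma glue_block_mem {k : ℕ} (p : ForestOn k (Finset.univ : Finset X)) (i : Fin k) :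
    p.1.1 i ∈ glue p :=
  mem_glue.2 (Or.inr ⟨i, (p.2.2.2 i).2.1⟩)

lemma childSet_glue {k : ℕ} (hk : 2 ≤ k) (p : ForestOn k (Finset.univ : Finset X)) :
    childSet (glue p) = Finset.univ.image p.1.1 := by
  classical
  apply Finset.Subset.antisymm
  · intro A hA
    rw [mem_childSet] at hA
    obtain ⟨hAg, hAu, hAmax⟩ := hA
    rcases mem_glue.1 hAg with rfl | ⟨j, hj⟩
    · exact absurd rfl hAu
    have hsub : A ⊆ p.1.1 j := (p.2.2.2 j).2.2.1 A hj
    rcases hAmax (p.1.1 j) (glue_block_mem p j) hsub with h1 | h1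
    · rw [← h1]
      exact Finset.mem_image_of_mem _ (Finset.mem_univ j)
    · exact absurd h1 (glue_block_ne_univ hk p j)
  · intro A hA
    obtain ⟨i, _, rfl⟩ := Finset.mem_image.1 hA
    refine mem_childSet.2 ⟨glue_block_mem p i, glue_block_ne_univ hk p i, ?_⟩
    intro B hB hiB
    rcases mem_glue.1 hB with rfl | ⟨j, hj⟩
    · exact Or.inr rfl
    have hBj : B ⊆ p.1.1 j := (p.2.2.2 j).2.2.1 B hj
    have hij : i = j := by
      by_contra hij
      have := p.2.1 i j hij
      obtain ⟨x, hx⟩ := forest_block_nonempty p i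
      exact Finset.disjoint_left.1 this hx (hBj (hiB hx))
    subst hij
    exact Or.inl (Finset.Subset.antisymm hBj hiB)

lemma glue_filter {k : ℕ} (hk : 2 ≤ k) (p : ForestOn k (Finset.univ : Finset X)) (i : Fin k) :
    (glue p).filter (· ⊆ p.1.1 i) = p.1.2 i := by
  classical
  ext B
  rw [Finset.mem_filter]
  constructor
  · rintro ⟨hBg, hBi⟩
    rcases mem_glue.1 hBg with rfl | ⟨j, hj⟩
    · exact absurd (Finset.univ_subset_iff.1 hBi) (glue_block_ne_univ hk p i)
    have hBj : B ⊆ p.1.1 j := (p.2.2.2 j).2.2.1 B hj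
    have hij : i = j := by
      by_contra hij
      obtain ⟨x, hx⟩ := (p.2.2.2 j).1 B hj
      exact Finset.disjoint_left.1 (p.2.1 i j hij) (hBi hx) (hBj hx)
    subst hij
    exact hj
  · intro hB
    exact ⟨mem_glue.2 (Or.inr ⟨i, hB⟩), (p.2.2.2 i).2.2.1 B hB⟩

lemma glue_eq_of_tree {k : ℕ}
    {T : Finset (Finset X)} (hT : IsTreeOn Finset.univ T)
    {e : Fin k → Finset X} (he : ∀ i, e i ∈ childSet T)
    (hcover : ∀ A ∈ T, A ≠ Finset.univ → ∃ i, A ⊆ e i)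
    {q : Fin k → Finset (Finset X)} (hq : ∀ i, q i = T.filter (· ⊆ e i)) :
    insert Finset.univ (Finset.univ.biUnion q) = T := by
  classical
  apply Finset.Subset.antisymm
  · intro A hA
    rcases Finset.mem_insert.1 hA with rfl | hA
    · exact hT.2.1
    · obtain ⟨i, _, hi⟩ := Finset.mem_biUnion.1 hA
      rw [hq i] at hi
      exact (Finset.mem_filter.1 hi).1
  · intro A hA
    by_cases hAu : A = Finset.univ
    · exact hAu ▸ Finset.mem_insert_self _ _
    · obtain ⟨i, hi⟩ := hcover A hA hAu
      refine Finset.mem_insert.2 (Or.inr (Finset.mem_biUnion.2 ⟨i, Finset.mem_univ i, ?_⟩))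
      rw [hq i]
      exact Finset.mem_filter.2 ⟨hA, hi⟩
end G
section H
variable {X : Type*} [DecidableEq X] [Fintype X]

lemma forest_blocks_injective {k : ℕ} {s : Finset X} (p : ForestOn k s) :
    Function.Injective p.1.1 := by
  intro i j hij
  by_contra hne
  obtain ⟨x, hx⟩ := forest_block_nonempty p i
  exact Finset.disjoint_left.1 (p.2.1 i j hne) hx (hij ▸ hx)

abbrev SubT (X : Type*) [DecidableEq X] [Fintype X] (k : ℕ) :=
  {T : Finset (Finset X) // IsTreeOn (Finset.univ : Finset X) T ∧ (childSet T).card = k}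

noncomputable instance subTFintype (k : ℕ) : Fintype (SubT X k) := by
  classical
  exact Subtype.fintype _

lemma subT_sigma_ext {k : ℕ}
    {x y : Σ T : SubT X k, {e : Fin k → Finset X //
      Function.Injective e ∧ Finset.univ.image e = childSet T.1}}
    (h1 : x.1.1 = y.1.1) (h2 : x.2.1 = y.2.1) : x = y := by
  obtain ⟨⟨T, hT⟩, ⟨e, he⟩⟩ := x
  obtain ⟨⟨T', hT'⟩, ⟨e', he'⟩⟩ := y
  dsimp only at h1 h2
  subst h1; subst h2
  rfl

lemma singleton_ne_univ (hX : 2 ≤ Fintype.card X) (x : X) :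
    ({x} : Finset X) ≠ Finset.univ := by
  intro h
  have := Finset.card_univ (α := X)
  rw [← h, Finset.card_singleton] at this
  omega

noncomputable def forestChild (hX : 2 ≤ Fintype.card X) {k : ℕ} (hk : 2 ≤ k) :
    ForestOn k (Finset.univ : Finset X) ≃
      Σ T : SubT X k, {e : Fin k → Finset X //
        Function.Injective e ∧ Finset.univ.image e = childSet T.1} := by
  classical
  have hne : Nonempty X := by
    rw [← Fintype.card_pos_iff]; omega
  refine Equiv.ofBijective (fun p =>
    ⟨⟨glue p, glue_isTreeOn hne p, by
        rw [childSet_glue hk p, Finset.card_image_of_injective _ (forest_blocks_injective p),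
          Finset.card_univ, Fintype.card_fin]⟩,
      ⟨p.1.1, forest_blocks_injective p, (childSet_glue hk p).symm⟩⟩) ⟨?_, ?_⟩
  · intro p p' h
    have hb : p.1.1 = p'.1.1 := congrArg (fun z =>
      (z : Σ T : SubT X k, {e : Fin k → Finset X //
        Function.Injective e ∧ Finset.univ.image e = childSet T.1}).2.1) h
    have hT : glue p = glue p' := congrArg (fun z =>
      (z : Σ T : SubT X k, {e : Fin k → Finset X //
        Function.Injective e ∧ Finset.univ.image e = childSet T.1}).1.1) h
    apply Subtype.ext
    apply Prod.ext hb
    funext i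
    rw [← glue_filter hk p i, ← glue_filter hk p' i, hT, hb]
  · rintro ⟨⟨T, hT, hck⟩, ⟨e, einj, eimg⟩⟩
    have hchild : ∀ i, e i ∈ childSet T := by
      intro i
      rw [← eimg]
      exact Finset.mem_image_of_mem _ (Finset.mem_univ i)
    have hcover : ∀ A ∈ T, A ≠ Finset.univ → ∃ i, A ⊆ e i := by
      intro A hA hAu
      obtain ⟨C, hC, hAC⟩ := exists_child hT hA hAu
      rw [← eimg] at hC
      obtain ⟨i, _, rfl⟩ := Finset.mem_image.1 hC
      exact ⟨i, hAC⟩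
    have hforest : IsForestOn k (Finset.univ : Finset X)
        (e, fun i => T.filter (· ⊆ e i)) := by
      refine ⟨?_, ?_, ?_⟩
      · intro i j hij
        rcases child_eq_or_disjoint hT (hchild i) (hchild j) with h1 | h1
        · exact absurd (einj h1) hij
        · exact h1
      · apply Finset.eq_univ_of_forall
        intro x
        rw [mem_sup_iff]
        obtain ⟨i, hi⟩ := hcover {x} (hT.2.2.2.1 x (Finset.mem_univ x))
          (singleton_ne_univ hX x)
        exact ⟨i, hi (Finset.mem_singleton_self x)⟩
      · intro i
        exact isTreeOn_filter hT (mem_childSet.1 (hchild i)).1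
    refine ⟨⟨(e, fun i => T.filter (· ⊆ e i)), hforest⟩, ?_⟩
    apply subT_sigma_ext
    · show glue _ = T
      exact glue_eq_of_tree hT hchild hcover (fun i => rfl)
    · rfl

lemma card_orderings {k : ℕ} (T : SubT X k) :
    Nat.card {e : Fin k → Finset X //
      Function.Injective e ∧ Finset.univ.image e = childSet T.1} = k.factorial := by
  classical
  have hcard : (childSet T.1).card = k := T.2.2
  have hmem : ∀ (e : {e : Fin k → Finset X //
      Function.Injective e ∧ Finset.univ.image e = childSet T.1}) (i : Fin k),
      e.1 i ∈ childSet T.1 := by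
    rintro ⟨ev, einj, eimg⟩ i
    dsimp only
    rw [← eimg]
    exact Finset.mem_image_of_mem _ (Finset.mem_univ i)
  have equiv1 : {e : Fin k → Finset X //
      Function.Injective e ∧ Finset.univ.image e = childSet T.1} ≃
      {e : Fin k → {A // A ∈ childSet T.1} // Function.Injective e} := by
    refine ⟨fun e => ⟨fun i => ⟨e.1 i, hmem e i⟩,
        fun i j h => e.2.1 (congrArg Subtype.val h)⟩,
      fun e => ⟨fun i => (e.1 i).1, ?_, ?_⟩, fun e => rfl, fun e => ?_⟩
    · intro i j h
      exact e.2 (Subtype.ext h)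
    · apply Finset.eq_of_subset_of_card_le
      · intro A hA
        obtain ⟨i, _, rfl⟩ := Finset.mem_image.1 hA
        exact (e.1 i).2
      · rw [hcard, Finset.card_image_of_injective _ (fun i j h => e.2 (Subtype.ext h)),
          Finset.card_univ, Fintype.card_fin]
    · apply Subtype.ext
      funext i
      rfl
  rw [Nat.card_congr equiv1, Nat.card_congr (Equiv.subtypeInjectiveEquivEmbedding _ _),
    Nat.card_eq_fintype_card, Fintype.card_embedding_eq, Fintype.card_coe, hcard,
    Fintype.card_fin, Nat.descFactorial_self]

lemma card_forest_univ_eq (hX : 2 ≤ Fintype.card X) {k : ℕ} (hk : 2 ≤ k) :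
    Nat.card (ForestOn k (Finset.univ : Finset X)) = k.factorial * Nat.card (SubT X k) := by
  classical
  rw [Nat.card_congr (forestChild hX hk)]
  rw [Nat.card_eq_fintype_card, Fintype.card_sigma]
  have : ∀ T : SubT X k, Fintype.card {e : Fin k → Finset X //
      Function.Injective e ∧ Finset.univ.image e = childSet T.1} = k.factorial := by
    intro T
    rw [← Nat.card_eq_fintype_card, card_orderings T]
  rw [Finset.sum_congr rfl (fun T _ => this T), Finset.sum_const, Finset.card_univ,
    smul_eq_mul, Nat.card_eq_fintype_card, mul_comm]
end H
section I
variable {X : Type*} [DecidableEq X] [Fintype X]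

lemma childSet_card_mem_Icc (hX : 2 ≤ Fintype.card X) {T : Finset (Finset X)}
    (hT : IsTreeOn Finset.univ T) :
    (childSet T).card ∈ Finset.Icc 2 (Fintype.card X) := by
  classical
  have hne : Nonempty X := by rw [← Fintype.card_pos_iff]; omega
  have hcover : ∀ x : X, ∃ C ∈ childSet T, x ∈ C := by
    intro x
    obtain ⟨C, hC, hxC⟩ := exists_child hT (hT.2.2.2.1 x (Finset.mem_univ x))
      (singleton_ne_univ hX x)
    exact ⟨C, hC, hxC (Finset.mem_singleton_self x)⟩
  have hup : (childSet T).card ≤ Fintype.card X := by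
    have := Finset.card_le_card_of_injOn
      (f := fun C : Finset X => if h : C.Nonempty then h.choose else hne.some)
      (fun C hC => Finset.mem_univ _)
      (fun C hC C' hC' hf => by
        have hC2 := Finset.mem_coe.1 hC
        have hC2' := Finset.mem_coe.1 hC'
        have hCne : C.Nonempty := hT.1 C (mem_childSet.1 hC2).1
        have hCne' : C'.Nonempty := hT.1 C' (mem_childSet.1 hC2').1
        dsimp only at hf
        rw [dif_pos hCne, dif_pos hCne'] at hf
        rcases child_eq_or_disjoint hT hC2 hC2' with h1 | h1
        · exact h1
        · exfalso
          have h1c : hCne.choose ∈ C := hCne.choose_spec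
          rw [hf] at h1c
          exact Finset.disjoint_left.1 h1 h1c hCne'.choose_spec)
    simpa using this
  have hlow : 2 ≤ (childSet T).card := by
    obtain ⟨x⟩ := hne
    obtain ⟨C, hC, hxC⟩ := hcover x
    have h1 : 1 ≤ (childSet T).card := Finset.card_pos.2 ⟨C, hC⟩
    rcases Nat.lt_or_ge (childSet T).card 2 with h2 | h2
    · exfalso
      have hcard1 : (childSet T).card = 1 := by omega
      obtain ⟨C0, hC0⟩ := Finset.card_eq_one.1 hcard1
      have : C0 = Finset.univ := by
        apply Finset.eq_univ_of_forall
        intro y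
        obtain ⟨Cy, hCy, hyC⟩ := hcover y
        rw [hC0, Finset.mem_singleton] at hCy
        rwa [hCy] at hyC
      exact (mem_childSet.1 (hC0 ▸ Finset.mem_singleton_self C0 : C0 ∈ childSet T)).2.1 this
    · exact h2
  exact Finset.mem_Icc.2 ⟨hlow, hup⟩

lemma card_tree_eq_sum (hX : 2 ≤ Fintype.card X) :
    Nat.card {T : Finset (Finset X) // IsTreeOn Finset.univ T} =
      ∑ k ∈ Finset.Icc 2 (Fintype.card X), Nat.card (SubT X k) := by
  classical
  rw [Nat.card_eq_fintype_card, Fintype.card_subtype]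
  rw [Finset.card_eq_sum_card_fiberwise
    (f := fun T : Finset (Finset X) => (childSet T).card)
    (t := Finset.Icc 2 (Fintype.card X))
    (fun T hT => childSet_card_mem_Icc hX (Finset.mem_filter.1 hT).2)]
  refine Finset.sum_congr rfl (fun k _ => ?_)
  rw [Nat.card_eq_fintype_card, Fintype.card_subtype, Finset.filter_filter]

lemma card_forest_one_eq :
    Nat.card (ForestOn 1 (Finset.univ : Finset X)) =
      Nat.card {T : Finset (Finset X) // IsTreeOn Finset.univ T} := by
  classical
  refine Nat.card_congr ⟨fun p => ⟨p.1.2 0, ?_⟩, fun T =>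
    ⟨(fun _ => Finset.univ, fun _ => T.1),
      fun i j hij => absurd (Subsingleton.elim i j) hij, ?_, fun _ => T.2⟩,
    fun p => ?_, fun T => rfl⟩
  · have hb : p.1.1 0 = Finset.univ := by
      have h := p.2.2.1
      have h2 : (Finset.univ : Finset (Fin 1)).sup p.1.1 = p.1.1 0 := by
        rw [show (Finset.univ : Finset (Fin 1)) = {0} from rfl, Finset.sup_singleton]
      rw [h2] at h
      exact h
    have ht := p.2.2.2 0
    rwa [hb] at ht
  · apply Finset.eq_univ_of_forall
    intro x
    exact mem_sup_iff.2 ⟨0, Finset.mem_univ x⟩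
  · apply Subtype.ext
    refine Prod.ext (funext fun i => ?_) (funext fun i => ?_)
    · have hb : p.1.1 0 = Finset.univ := by
        have h := p.2.2.1
        have h2 : (Finset.univ : Finset (Fin 1)).sup p.1.1 = p.1.1 0 := by
          rw [show (Finset.univ : Finset (Fin 1)) = {0} from rfl, Finset.sup_singleton]
        rw [h2] at h
        exact h
      rw [Subsingleton.elim i 0, hb]
    · rw [Subsingleton.elim i 0]

lemma card_forest_zero_eq (hne : Nonempty X) :
    Nat.card (ForestOn 0 (Finset.univ : Finset X)) = 0 := by
  have : IsEmpty (ForestOn 0 (Finset.univ : Finset X)) := by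
    refine ⟨fun p => ?_⟩
    have h := p.2.2.1
    rw [show (Finset.univ : Finset (Fin 0)) = ∅ from rfl, Finset.sup_empty] at h
    obtain ⟨x⟩ := hne
    have : x ∈ (⊥ : Finset X) := h.symm ▸ Finset.mem_univ x
    simp at this
  exact Nat.card_of_isEmpty
end I
lemma t_eq_card_tree (n : ℕ) :
    t n = Nat.card {T : Finset (Finset (Fin n)) // IsTreeOn Finset.univ T} :=
  (Nat.card_congr (Equiv.subtypeEquivRight fun T => isTreeOn_univ_iff T)).symm

/-- The functional equation `1 - x + 2 f(x) = exp (f(x))` of formal power series. -/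
theorem egf_functional_equation :
    (1 : PowerSeries ℚ) - PowerSeries.X + 2 * f = expComp f := by
  ext n
  rw [map_add, map_sub, expComp, coeff_mk,
    show (2 : PowerSeries ℚ) * f = f + f from two_mul f, map_add, coeff_f]
  match n with
  | 0 => simp [t_zero]
  | 1 =>
    rw [Finset.sum_range_succ, Finset.sum_range_one]
    simp [coeff_f, t_zero, t_one, PowerSeries.coeff_one, PowerSeries.coeff_X, pow_one]
  | (m+2) =>
    set n := m + 2 with hn
    have hn0 : n ≠ 0 := by omega
    have hn1 : n ≠ 1 := by omega
    have h2card : 2 ≤ Fintype.card (Fin n) := by rw [Fintype.card_fin]; omega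
    have hnfac : ((n.factorial : ℚ)) ≠ 0 := Nat.cast_ne_zero.2 (Nat.factorial_ne_zero n)
    have hforest : ∀ k, (PowerSeries.coeff n) (f ^ k) =
        (Nat.card (ForestOn k (Finset.univ : Finset (Fin n))) : ℚ) / n.factorial := by
      intro k
      have h := card_forestOn k (Finset.univ : Finset (Fin n))
      rw [Finset.card_univ, Fintype.card_fin] at h
      rw [h, mul_comm, mul_div_assoc, div_self hnfac, mul_one]
    have hrange : Finset.range (n + 1) = insert 0 (insert 1 (Finset.Icc 2 n)) := by
      ext i
      simp only [Finset.mem_range, Finset.mem_insert, Finset.mem_Icc]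
      omega
    rw [hrange, Finset.sum_insert (by simp), Finset.sum_insert (by simp)]
    rw [hforest 0, card_forest_zero_eq ⟨0⟩]
    rw [hforest 1, card_forest_one_eq, ← t_eq_card_tree]
    have hsum : ∀ k ∈ Finset.Icc 2 n, (PowerSeries.coeff n) (f ^ k) / (k.factorial : ℚ)
        = (Nat.card (SubT (Fin n) k) : ℚ) / (n.factorial : ℚ) := by
      intro k hk
      have hk2 : 2 ≤ k := (Finset.mem_Icc.1 hk).1
      have hkfac : ((k.factorial : ℚ)) ≠ 0 := Nat.cast_ne_zero.2 (Nat.factorial_ne_zero k)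
      rw [hforest k, card_forest_univ_eq h2card hk2]
      push_cast
      field_simp
    rw [Finset.sum_congr rfl hsum, ← Finset.sum_div, ← Nat.cast_sum]
    have : ∑ k ∈ Finset.Icc 2 n, Nat.card (SubT (Fin n) k) = t n := by
      rw [t_eq_card_tree, card_tree_eq_sum h2card, Fintype.card_fin]
    rw [this]
    rw [PowerSeries.coeff_one, PowerSeries.coeff_X, if_neg hn0, if_neg hn1]
    push_cast
    field_simp
    simp only [Nat.factorial_zero, Nat.factorial_one, Nat.cast_one]
    ring
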